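/- Let (A_l, B_l, C_l, D_l) be an ODE-LTI associated with the DAE d(Ex)/dt = Ax + Bu. For any absolutely continuous v and locally integrable g on an interval I with v̇ = A_l v + B_l g a.e., the pair (x,u) defined by (x;u) = C_l v + D_l g is a solution of the DAE on I. -/

import Mathlib

open MeasureTheory Set Filter Matrix

open Classical in
noncomputable def pinv {α β : Type} [Fintype α] [Fintype β] [DecidableEq α] [DecidableEq β]
    (M : Matrix α β ℝ) : Matrix β α ℝ :=
  if h : ∃ X : Matrix β α ℝ,
      M * X * M = M ∧ X * M * X = X ∧ (M * X)ᵀ = M * X ∧ (X * M)ᵀ = X * M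
  then h.choose else 0

def IsNiceInterval (I : Set ℝ) : Prop :=
  (∃ a b, I = Set.Icc a b) ∨ (∃ a, I = Set.Ici a) ∨ (∃ a, I = Set.Iic a) ∨ I = Set.univ

def IsDAESolution {c n m : ℕ} (E A : Matrix (Fin c) (Fin n) ℝ)
    (B : Matrix (Fin c) (Fin m) ℝ) (I : Set ℝ)
    (x : ℝ → Fin n → ℝ) (u : ℝ → Fin m → ℝ) : Prop :=
  LocallyIntegrableOn x I ∧ LocallyIntegrableOn u I ∧
  ∀ t₀ ∈ I, ∀ t ∈ I, t₀ ≤ t →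
    E.mulVec (x t) = E.mulVec (x t₀) + ∫ s in t₀..t, (A.mulVec (x s) + B.mulVec (u s))

def IsStateTraj {r : ℕ} {σ : Type} [Fintype σ] (Al : Matrix (Fin r) (Fin r) ℝ)
    (Bl : Matrix (Fin r) σ ℝ)
    (I : Set ℝ) (p : ℝ → Fin r → ℝ) (g : ℝ → σ → ℝ) : Prop :=
  LocallyIntegrableOn p I ∧ LocallyIntegrableOn g I ∧
  ∀ t₀ ∈ I, ∀ t ∈ I, t₀ ≤ t →
    p t = p t₀ + ∫ τ in t₀..t, (Al.mulVec (p τ) + Bl.mulVec (g τ))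

def RealizesOn {c n m nh k : ℕ} (E A : Matrix (Fin c) (Fin n) ℝ) (B : Matrix (Fin c) (Fin m) ℝ)
    (Al : Matrix (Fin nh) (Fin nh) ℝ) (Bl : Matrix (Fin nh) (Fin k) ℝ)
    (Cl : Matrix (Fin n ⊕ Fin m) (Fin nh) ℝ) (Dl : Matrix (Fin n ⊕ Fin m) (Fin k) ℝ)
    (I : Set ℝ) : Prop :=
  (∀ x u, IsDAESolution E A B I x u →
    ∃ p g, IsStateTraj Al Bl I p g ∧
      ∀ᵐ t ∂(volume.restrict I), Sum.elim (x t) (u t) = Cl.mulVec (p t) + Dl.mulVec (g t)) ∧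
  (∀ p g, IsStateTraj Al Bl I p g →
    ∃ x u, IsDAESolution E A B I x u ∧
      ∀ᵐ t ∂(volume.restrict I), Sum.elim (x t) (u t) = Cl.mulVec (p t) + Dl.mulVec (g t))

def firstRows {n m nh : ℕ} (Cl : Matrix (Fin n ⊕ Fin m) (Fin nh) ℝ) :
    Matrix (Fin n) (Fin nh) ℝ :=
  Matrix.of fun i j => Cl (Sum.inl i) j

def IsAssociated {c n m nh k : ℕ} (E A : Matrix (Fin c) (Fin n) ℝ)
    (B : Matrix (Fin c) (Fin m) ℝ)
    (Al : Matrix (Fin nh) (Fin nh) ℝ) (Bl : Matrix (Fin nh) (Fin k) ℝ)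
    (Cl : Matrix (Fin n ⊕ Fin m) (Fin nh) ℝ) (Dl : Matrix (Fin n ⊕ Fin m) (Fin k) ℝ) : Prop :=
  nh ≤ n ∧
  ((Dl = 0 ∧ Bl = 0 ∧ k = 1) ∨ Dl.rank = k) ∧
  E * firstRows Dl = 0 ∧ (E * firstRows Cl).rank = nh ∧
  ∀ I : Set ℝ, IsNiceInterval I → RealizesOn E A B Al Bl Cl Dl I

def ConsistencySet {c n m : ℕ} (E A : Matrix (Fin c) (Fin n) ℝ)
    (B : Matrix (Fin c) (Fin m) ℝ) : Set (Fin c → ℝ) :=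
  {z | ∃ I : Set ℝ, IsNiceInterval I ∧ (0 : ℝ) ∈ I ∧
    ∃ x u, IsDAESolution E A B I x u ∧ E.mulVec (x 0) = z}


section Auxiliary

open Topology

noncomputable def clmOf {α β : Type} [Fintype α] [Fintype β]
    (L : (α → ℝ) →ₗ[ℝ] (β → ℝ)) : (α → ℝ) →L[ℝ] (β → ℝ) :=
  LinearMap.toContinuousLinearMap L

lemma li_comp {α β : Type} [Fintype α] [Fintype β] {I : Set ℝ} {w : ℝ → α → ℝ}
    (L : (α → ℝ) →ₗ[ℝ] (β → ℝ)) (hw : LocallyIntegrableOn w I) :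
    LocallyIntegrableOn (fun t => L (w t)) I := by
  intro x hx
  obtain ⟨s, hs, hint⟩ := hw x hx
  refine ⟨s, hs, ?_⟩
  have := (clmOf L).integrable_comp hint
  simpa [clmOf, IntegrableOn] using this

lemma li_mulVec {α β : Type} [Fintype α] [Fintype β] {I : Set ℝ} {w : ℝ → α → ℝ}
    (M : Matrix β α ℝ) (hw : LocallyIntegrableOn w I) :
    LocallyIntegrableOn (fun t => M.mulVec (w t)) I :=
  li_comp M.mulVecLin hw

lemma li_intervalIntegrable {γ : Type} [Fintype γ] {I : Set ℝ} {w : ℝ → γ → ℝ}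
    (hw : LocallyIntegrableOn w I) {a b : ℝ} (hab : a ≤ b) (hsub : Set.Icc a b ⊆ I) :
    IntervalIntegrable w volume a b := by
  have h := hw.integrableOn_compact_subset hsub isCompact_Icc
  have h2 : IntegrableOn w (Set.uIcc a b) volume := by rwa [Set.uIcc_of_le hab]
  exact h2.intervalIntegrable

lemma eq_const_of_ae_const {c : ℕ} {a b y : ℝ} (hab : a < b) {D : ℝ → Fin c → ℝ}
    {cst : Fin c → ℝ} (hc : ContinuousWithinAt D (Set.Ioo a b) y) (hy : y ∈ Set.Icc a b)
    (hae : ∀ᵐ s ∂(volume.restrict (Set.Ioo a b)), D s = cst) : D y = cst := by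
  set Z := {s ∈ Set.Ioo a b | D s = cst} with hZ
  have hZsub : Z ⊆ Set.Ioo a b := fun s hs => hs.1
  have hyc : y ∈ closure Z := by
    rw [mem_closure_iff]
    intro U hU hyU
    have hyI : y ∈ closure (Set.Ioo a b) := by
      rwa [closure_Ioo hab.ne]
    have hne : (U ∩ Set.Ioo a b).Nonempty := mem_closure_iff.1 hyI U hU hyU
    have hpos : 0 < volume (U ∩ Set.Ioo a b) :=
      (hU.inter isOpen_Ioo).measure_pos volume hne
    by_contra hemp
    rw [Set.not_nonempty_iff_eq_empty] at hemp
    have h0 : volume ({s | ¬ D s = cst} ∩ Set.Ioo a b) = 0 := by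
      have h := hae
      rw [ae_iff] at h
      rwa [Measure.restrict_apply' measurableSet_Ioo] at h
    have hsub : U ∩ Set.Ioo a b ⊆ {s | ¬ D s = cst} ∩ Set.Ioo a b := by
      intro s hs
      refine ⟨fun hDs => ?_, hs.2⟩
      have hmem : s ∈ U ∩ Z := ⟨hs.1, hs.2, hDs⟩
      rw [hemp] at hmem
      exact hmem
    exact absurd (measure_mono_null hsub h0) hpos.ne'
  have hne : (𝓝[Z] y).NeBot := mem_closure_iff_nhdsWithin_neBot.1 hyc
  have h1 : Tendsto D (𝓝[Z] y) (𝓝 (D y)) := hc.mono hZsub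
  have h2 : Tendsto D (𝓝[Z] y) (𝓝 cst) := by
    refine Tendsto.congr' ?_ tendsto_const_nhds
    filter_upwards [self_mem_nhdsWithin] with s hs
    exact hs.2.symm
  exact tendsto_nhds_unique h1 h2

lemma nice_ordConnected {I : Set ℝ} (hI : IsNiceInterval I) : I.OrdConnected := by
  rcases hI with ⟨a, b, rfl⟩ | ⟨a, rfl⟩ | ⟨a, rfl⟩ | rfl
  · exact Set.ordConnected_Icc
  · exact Set.ordConnected_Ici
  · exact Set.ordConnected_Iic
  · exact Set.ordConnected_univ

lemma mulVec_inl_eq {c n m nh k : ℕ} (E : Matrix (Fin c) (Fin n) ℝ)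
    (Cl : Matrix (Fin n ⊕ Fin m) (Fin nh) ℝ) (Dl : Matrix (Fin n ⊕ Fin m) (Fin k) ℝ)
    (w : Fin nh → ℝ) (z : Fin k → ℝ) :
    E.mulVec (fun i => (Cl.mulVec w + Dl.mulVec z) (Sum.inl i)) =
      (E * firstRows Cl).mulVec w + (E * firstRows Dl).mulVec z := by
  have h1 : (fun i => (Cl.mulVec w + Dl.mulVec z) (Sum.inl i)) =
      (firstRows Cl).mulVec w + (firstRows Dl).mulVec z := rfl
  rw [h1, Matrix.mulVec_add, ← Matrix.mulVec_mulVec, ← Matrix.mulVec_mulVec]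

end Auxiliary

/-- Theorem (dae2lin:theo_main), second half: any output trajectory of an associated
ODE-LTI is a solution of the DAE. -/
theorem ode_output_is_dae_solution {c n m nh k : ℕ}
    (E A : Matrix (Fin c) (Fin n) ℝ) (B : Matrix (Fin c) (Fin m) ℝ)
    (Al : Matrix (Fin nh) (Fin nh) ℝ) (Bl : Matrix (Fin nh) (Fin k) ℝ)
    (Cl : Matrix (Fin n ⊕ Fin m) (Fin nh) ℝ) (Dl : Matrix (Fin n ⊕ Fin m) (Fin k) ℝ)
    (hassoc : IsAssociated E A B Al Bl Cl Dl)
    (I : Set ℝ) (hI : IsNiceInterval I)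
    (v : ℝ → Fin nh → ℝ) (g : ℝ → Fin k → ℝ)
    (hvg : IsStateTraj Al Bl I v g) :
    IsDAESolution E A B I
      (fun t i => (Cl.mulVec (v t) + Dl.mulVec (g t)) (Sum.inl i))
      (fun t j => (Cl.mulVec (v t) + Dl.mulVec (g t)) (Sum.inr j)) := by
  obtain ⟨hnh, hrk, hED, hECrank, hreal⟩ := hassoc
  obtain ⟨hv_li, hg_li, hv_eq⟩ := hvg
  have hOC : I.OrdConnected := nice_ordConnected hI
  set EC := E * firstRows Cl with hEC
  have key : ∀ w z, E.mulVec (fun i => (Cl.mulVec w + Dl.mulVec z) (Sum.inl i))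
      = EC.mulVec w := by
    intro w z
    rw [mulVec_inl_eq, hED, Matrix.zero_mulVec, add_zero]
  -- local integrability of the candidate solution
  have hw_li : LocallyIntegrableOn (fun t => Cl.mulVec (v t) + Dl.mulVec (g t)) I :=
    (li_mulVec Cl hv_li).add (li_mulVec Dl hg_li)
  have hx_li : LocallyIntegrableOn
      (fun t i => (Cl.mulVec (v t) + Dl.mulVec (g t)) (Sum.inl i)) I := by
    have := li_comp (LinearMap.funLeft ℝ ℝ (Sum.inl : Fin n → Fin n ⊕ Fin m)) hw_li
    exact this
  have hu_li : LocallyIntegrableOn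
      (fun t j => (Cl.mulVec (v t) + Dl.mulVec (g t)) (Sum.inr j)) I := by
    have := li_comp (LinearMap.funLeft ℝ ℝ (Sum.inr : Fin m → Fin n ⊕ Fin m)) hw_li
    exact this
  refine ⟨hx_li, hu_li, ?_⟩
  intro t₀ ht₀ t ht hle
  rcases eq_or_lt_of_le hle with rfl | hlt
  · simp
  have hIcc : Set.Icc t₀ t ⊆ I := hOC.out ht₀ ht
  -- the EC ∘ v integral equation
  have hAlBl_li : LocallyIntegrableOn (fun τ => Al.mulVec (v τ) + Bl.mulVec (g τ)) I :=
    (li_mulVec Al hv_li).add (li_mulVec Bl hg_li)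
  set G : ℝ → Fin c → ℝ := fun τ => EC.mulVec (Al.mulVec (v τ) + Bl.mulVec (g τ)) with hG
  have hG_li : LocallyIntegrableOn G I := li_mulVec EC hAlBl_li
  have hECv : ∀ s ∈ Set.Icc t₀ t,
      EC.mulVec (v s) = EC.mulVec (v t₀) + ∫ τ in t₀..s, G τ := by
    intro s hs
    have hIccs : Set.Icc t₀ s ⊆ I := fun r hr => hIcc ⟨hr.1, hr.2.trans hs.2⟩
    have hii : IntervalIntegrable (fun τ => Al.mulVec (v τ) + Bl.mulVec (g τ))
        volume t₀ s := li_intervalIntegrable hAlBl_li hs.1 hIccs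
    have h := hv_eq t₀ ht₀ s (hIcc hs) hs.1
    have hcomm := (clmOf (EC.mulVecLin)).intervalIntegral_comp_comm hii
    calc EC.mulVec (v s)
        = EC.mulVec (v t₀ + ∫ τ in t₀..s, (Al.mulVec (v τ) + Bl.mulVec (g τ))) := by rw [← h]
      _ = EC.mulVec (v t₀)
          + EC.mulVec (∫ τ in t₀..s, (Al.mulVec (v τ) + Bl.mulVec (g τ))) :=
          Matrix.mulVec_add _ _ _
      _ = EC.mulVec (v t₀) + ∫ τ in t₀..s, G τ := by
          congr 1
          have : (∫ τ in t₀..s, (clmOf (EC.mulVecLin))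
              ((fun τ => Al.mulVec (v τ) + Bl.mulVec (g τ)) τ)) =
              (clmOf (EC.mulVecLin))
              (∫ τ in t₀..s, (Al.mulVec (v τ) + Bl.mulVec (g τ))) := hcomm
          simpa [clmOf, hG] using this.symm
  -- obtain the realized DAE solution
  obtain ⟨x, u, hxu, hae⟩ := (hreal I hI).2 v g ⟨hv_li, hg_li, hv_eq⟩
  obtain ⟨hxli, huli, hx_eq⟩ := hxu
  have haeI : ∀ᵐ s ∂(volume.restrict I),
      E.mulVec (x s) = EC.mulVec (v s) ∧
      A.mulVec (x s) + B.mulVec (u s) =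
        A.mulVec (fun i => (Cl.mulVec (v s) + Dl.mulVec (g s)) (Sum.inl i)) +
        B.mulVec (fun j => (Cl.mulVec (v s) + Dl.mulVec (g s)) (Sum.inr j)) := by
    filter_upwards [hae] with s hs
    have hxs : x s = fun i => (Cl.mulVec (v s) + Dl.mulVec (g s)) (Sum.inl i) := by
      funext i
      exact congrFun hs (Sum.inl i)
    have hus : u s = fun j => (Cl.mulVec (v s) + Dl.mulVec (g s)) (Sum.inr j) := by
      funext j
      exact congrFun hs (Sum.inr j)
    refine ⟨?_, by rw [hxs, hus]⟩
    rw [hxs, key]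
  set AxBu : ℝ → Fin c → ℝ := fun s => A.mulVec (x s) + B.mulVec (u s) with hAxBu
  have hAxBu_li : LocallyIntegrableOn AxBu I :=
    (li_mulVec A hxli).add (li_mulVec B huli)
  have hiiAxBu : IntervalIntegrable AxBu volume t₀ t :=
    li_intervalIntegrable hAxBu_li hle hIcc
  have hiiG : IntervalIntegrable G volume t₀ t := li_intervalIntegrable hG_li hle hIcc
  -- step 1 : the goal integral equals ∫ AxBu
  have hcongr : (∫ s in t₀..t,
      (A.mulVec (fun i => (Cl.mulVec (v s) + Dl.mulVec (g s)) (Sum.inl i)) +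
       B.mulVec (fun j => (Cl.mulVec (v s) + Dl.mulVec (g s)) (Sum.inr j)))) =
      ∫ s in t₀..t, AxBu s := by
    apply intervalIntegral.integral_congr_ae
    have hsub : Set.Ioc t₀ t ⊆ I := fun r hr => hIcc ⟨le_of_lt hr.1, hr.2⟩
    have h1 := ae_restrict_of_ae_restrict_of_subset hsub haeI
    have h2 := ae_imp_of_ae_restrict h1
    filter_upwards [h2] with s hs hsmem
    rw [Set.uIoc_of_le hle] at hsmem
    exact (hs hsmem).2.symm
  -- step 2 : ∫ AxBu = ∫ G
  set Ψ : ℝ → Fin c → ℝ := fun s => ∫ τ in t₀..s, (AxBu τ - G τ) with hΨ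
  have hΨval : ∀ s ∈ Set.Icc t₀ t,
      Ψ s = (E.mulVec (x s) - EC.mulVec (v s)) - (E.mulVec (x t₀) - EC.mulVec (v t₀)) := by
    intro s hs
    have hIccs : Set.Icc t₀ s ⊆ I := fun r hr => hIcc ⟨hr.1, hr.2.trans hs.2⟩
    have h1 : IntervalIntegrable AxBu volume t₀ s :=
      li_intervalIntegrable hAxBu_li hs.1 hIccs
    have h2 : IntervalIntegrable G volume t₀ s :=
      li_intervalIntegrable hG_li hs.1 hIccs
    have e1 := hx_eq t₀ ht₀ s (hIcc hs) hs.1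
    have e2 := hECv s hs
    have i1 : (∫ τ in t₀..s, AxBu τ) = E.mulVec (x s) - E.mulVec (x t₀) := by
      rw [e1]; abel
    have i2 : (∫ τ in t₀..s, G τ) = EC.mulVec (v s) - EC.mulVec (v t₀) := by
      rw [e2]; abel
    rw [hΨ]
    simp only [intervalIntegral.integral_sub h1 h2, i1, i2]
    abel
  have hcont : ContinuousOn Ψ (Set.Icc t₀ t) := by
    have hint : IntegrableOn (fun τ => AxBu τ - G τ) (Set.uIcc t₀ t) volume := by
      rw [Set.uIcc_of_le hle]
      exact ((hAxBu_li.sub hG_li).integrableOn_compact_subset hIcc isCompact_Icc)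
    have := intervalIntegral.continuousOn_primitive_interval hint
    rwa [Set.uIcc_of_le hle] at this
  set cst : Fin c → ℝ := -(E.mulVec (x t₀) - EC.mulVec (v t₀)) with hcst
  have haeΨ : ∀ᵐ s ∂(volume.restrict (Set.Ioo t₀ t)), Ψ s = cst := by
    have hsub : Set.Ioo t₀ t ⊆ I := fun r hr => hIcc ⟨le_of_lt hr.1, le_of_lt hr.2⟩
    have h1 := ae_restrict_of_ae_restrict_of_subset hsub haeI
    filter_upwards [h1, ae_restrict_mem measurableSet_Ioo] with s hs hsmem
    have := hΨval s ⟨le_of_lt hsmem.1, le_of_lt hsmem.2⟩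
    rw [this, hs.1, hcst]
    abel
  have hΨt₀ : Ψ t₀ = cst :=
    eq_const_of_ae_const hlt ((hcont t₀ ⟨le_rfl, hle⟩).mono Set.Ioo_subset_Icc_self)
      ⟨le_rfl, hle⟩ haeΨ
  have hΨt : Ψ t = cst :=
    eq_const_of_ae_const hlt ((hcont t ⟨hle, le_rfl⟩).mono Set.Ioo_subset_Icc_self)
      ⟨hle, le_rfl⟩ haeΨ
  have hΨt₀0 : Ψ t₀ = 0 := by
    rw [hΨ]; simp
  have hΨt0 : Ψ t = 0 := by rw [hΨt, ← hΨt₀, hΨt₀0]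
  have hints : (∫ τ in t₀..t, AxBu τ) = ∫ τ in t₀..t, G τ := by
    have := hΨt0
    rw [hΨ] at this
    simp only [intervalIntegral.integral_sub hiiAxBu hiiG] at this
    have := sub_eq_zero.mp this
    exact this
  -- assemble
  rw [key (v t) (g t), key (v t₀) (g t₀), hcongr, hints]
  exact hECv t ⟨hle, le_rfl⟩
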